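/- Let m ∈ (−1,1) with m ∉ {−1/2, 1/2}, let κ̃ ∈ ℝ, and let Λ₀ > 0. Let ψ ∈ L²((0,∞)) satisfy ψ(p) = p^{−3/2−m} + κ̃ p^{−3/2+m} for all p ≥ Λ₀ and the normalization ∫₀^{Λ₀} q ψ(q) dq = Λ₀^{1/2−m}/(1/2 − m) + κ̃ Λ₀^{1/2+m}/(1/2 + m). Define f_Λ := −[ (1/2 − m) Λ^{−m} + κ̃ (1/2 + m) Λ^{m} ] / [ (1/2 − m)^{−1} Λ^{−m} + κ̃ (1/2 + m)^{−1} Λ^{m} ], and assume there is Λ₁ ≥ Λ₀ such that the denominator is nonzero for all Λ ≥ Λ₁. For Λ ≥ Λ₁ define A_Λ ψ(p) := 1_{(0,Λ]}(p) · [ p² ψ(p) + (m² − 1/4) ∫₀^Λ min(p,q) ψ(q) dq + (f_Λ/Λ) · p · ∫₀^Λ q ψ(q) dq ]. Then A_Λ ψ converges in L²((0,∞)) as Λ → ∞ to the function G(p) := p² ( ψ(p) − p^{−3/2−m} − κ̃ p^{−3/2+m} ) + (m² − 1/4) ∫_p^∞ (p − q)( ψ(q) − q^{−3/2−m} − κ̃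 q^{−3/2+m} ) dq, where the last integrand vanishes for q ≥ Λ₀. -/

import Mathlib

open Filter MeasureTheory

/-- The cutoff Dirichlet Bessel operator with coupling `α = m²` plus rank-one counterterm,
`A_Λ ψ(p) = 1_{(0,Λ]}(p) [ p²ψ(p) + (m²-1/4)∫₀^Λ min(p,q)ψ(q)dq + (f_Λ/Λ) p ∫₀^Λ qψ(q)dq ]`. -/
noncomputable def cutoffBesselD (m : ℝ) (f : ℝ → ℝ) (ψ : ℝ → ℂ) (Λ : ℝ) : ℝ → ℂ :=
  fun p => Set.indicator (Set.Ioc (0:ℝ) Λ) (fun p =>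
    (p : ℂ)^2 * ψ p
      + ((m^2 - 1/4 : ℝ) : ℂ) * (∫ q in Set.Ioc (0:ℝ) Λ, ((min p q : ℝ) : ℂ) * ψ q)
      + ((f Λ / Λ : ℝ) : ℂ) * (p : ℂ) * (∫ q in Set.Ioc (0:ℝ) Λ, (q : ℂ) * ψ q)) p

/-- The running coupling constant
`f_Λ = -[(1/2-m)Λ^{-m} + κ̃(1/2+m)Λ^m] / [(1/2-m)⁻¹Λ^{-m} + κ̃(1/2+m)⁻¹Λ^m]`. -/
noncomputable def runningCouplingD (m κ : ℝ) : ℝ → ℝ :=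
  fun Λ => -(((1/2 - m) * Λ ^ (-m) + κ * (1/2 + m) * Λ ^ m) /
    ((1/2 - m)⁻¹ * Λ ^ (-m) + κ * (1/2 + m)⁻¹ * Λ ^ m))

/-- Action of the renormalized (self-adjoint) Dirichlet Bessel operator on the singular
vector `ψ` behaving like `p^{-3/2-m} + κ̃ p^{-3/2+m}` at infinity. -/
noncomputable def renormalizedActionD (m κ : ℝ) (ψ : ℝ → ℂ) : ℝ → ℂ :=
  fun p => (p : ℂ)^2 * (ψ p - ((p ^ (-3/2 - m) + κ * p ^ (-3/2 + m) : ℝ) : ℂ))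
    + ((m^2 - 1/4 : ℝ) : ℂ) *
        ∫ q in Set.Ioi p, ((p - q : ℝ) : ℂ) *
          (ψ q - ((q ^ (-3/2 - m) + κ * q ^ (-3/2 + m) : ℝ) : ℂ))

namespace BesselDAux

noncomputable def chiD (m κ q : ℝ) : ℝ := q ^ (-3/2 - m) + κ * q ^ (-3/2 + m)

noncomputable def SD (m κ q : ℝ) : ℝ :=
  q ^ (-1/2 - m) / (-1/2 - m) + κ * q ^ (-1/2 + m) / (-1/2 + m)

noncomputable def RD (m κ q : ℝ) : ℝ :=
  q ^ (1/2 - m) / (1/2 - m) + κ * q ^ (1/2 + m) / (1/2 + m)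

noncomputable def FD (m κ q : ℝ) : ℝ :=
  (1/2 - m) * q ^ (-1/2 - m) + κ * (1/2 + m) * q ^ (-1/2 + m)

lemma cSD_eq_FD (m κ q : ℝ) (hm1 : m ≠ 1/2) (hm2 : m ≠ -1/2) :
    (m^2 - 1/4) * SD m κ q = FD m κ q := by
  have h1 : (-1 - m*2 : ℝ) ≠ 0 := fun h => hm2 (by linarith)
  have h2 : (-1 + m*2 : ℝ) ≠ 0 := fun h => hm1 (by linarith)
  have h1' : (-1/2 - m : ℝ) ≠ 0 := fun h => hm2 (by linarith)
  have h2' : (-1/2 + m : ℝ) ≠ 0 := fun h => hm1 (by linarith)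
  have c1 : (-1/2 - m : ℝ) * (-1/2 - m)⁻¹ = 1 := mul_inv_cancel₀ h1'
  have c2 : (-1/2 + m : ℝ) * (-1/2 + m)⁻¹ = 1 := mul_inv_cancel₀ h2'
  unfold SD FD
  linear_combination ((1/2 - m) * q ^ (-1/2 - m)) * c1 + (κ * (1/2 + m) * q ^ (-1/2 + m)) * c2

lemma cRD_eq_HD (m κ q : ℝ) (hm1 : m ≠ 1/2) (hm2 : m ≠ -1/2) :
    (m^2 - 1/4) * RD m κ q
      = -((1/2 + m) * q ^ (1/2 - m)) - κ * (1/2 - m) * q ^ (1/2 + m) := by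
  have h1 : (1 - m*2 : ℝ) ≠ 0 := fun h => hm1 (by linarith)
  have h2 : (1 + m*2 : ℝ) ≠ 0 := fun h => hm2 (by linarith)
  have h1' : (1/2 - m : ℝ) ≠ 0 := fun h => hm1 (by linarith)
  have h2' : (1/2 + m : ℝ) ≠ 0 := fun h => hm2 (by linarith)
  have c1 : (1/2 - m : ℝ) * (1/2 - m)⁻¹ = 1 := mul_inv_cancel₀ h1'
  have c2 : (1/2 + m : ℝ) * (1/2 + m)⁻¹ = 1 := mul_inv_cancel₀ h2'
  unfold RD
  linear_combination (-(1/2 + m) * q ^ (1/2 - m)) * c1 + (-(κ * (1/2 - m)) * q ^ (1/2 + m)) * c2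

lemma intchi (m κ a b : ℝ) (hm1 : m ≠ 1/2) (hm2 : m ≠ -1/2) (ha : 0 < a) (hab : a ≤ b) :
    ∫ q in Set.Ioc a b, chiD m κ q = SD m κ b - SD m κ a := by
  have h0 : (0:ℝ) ∉ Set.uIcc a b := by
    rw [Set.uIcc_of_le hab]; exact fun h => absurd h.1 (not_le.2 ha)
  have hi1 : IntervalIntegrable (fun q : ℝ => q ^ (-3/2 - m)) volume a b :=
    intervalIntegral.intervalIntegrable_rpow (Or.inr h0)
  have hi2 : IntervalIntegrable (fun q : ℝ => κ * q ^ (-3/2 + m)) volume a b :=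
    (intervalIntegral.intervalIntegrable_rpow (Or.inr h0)).const_mul κ
  rw [← intervalIntegral.integral_of_le hab]
  unfold chiD
  rw [intervalIntegral.integral_add hi1 hi2, intervalIntegral.integral_const_mul,
    integral_rpow (Or.inr ⟨fun h => hm2 (by linarith), h0⟩),
    integral_rpow (Or.inr ⟨fun h => hm1 (by linarith), h0⟩),
    show (-3/2 - m + 1 : ℝ) = -1/2 - m by ring,
    show (-3/2 + m + 1 : ℝ) = -1/2 + m by ring]
  unfold SD
  ring

lemma intqchi (m κ a b : ℝ) (hm1 : m ≠ 1/2) (hm2 : m ≠ -1/2) (ha : 0 < a) (hab : a ≤ b) :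
    ∫ q in Set.Ioc a b, q * chiD m κ q = RD m κ b - RD m κ a := by
  have h0 : (0:ℝ) ∉ Set.uIcc a b := by
    rw [Set.uIcc_of_le hab]; exact fun h => absurd h.1 (not_le.2 ha)
  have hcongr : Set.EqOn (fun q : ℝ => q * chiD m κ q)
      (fun q : ℝ => q ^ (-1/2 - m) + κ * q ^ (-1/2 + m)) (Set.Ioc a b) := by
    intro q hq
    have hq0 : 0 < q := lt_trans ha hq.1
    have e1 : q ^ (-1/2 - m) = q * q ^ (-3/2 - m) := by
      rw [show (-1/2 - m : ℝ) = 1 + (-3/2 - m) by ring, Real.rpow_add hq0 1 (-3/2 - m),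
        Real.rpow_one]
    have e2 : q ^ (-1/2 + m) = q * q ^ (-3/2 + m) := by
      rw [show (-1/2 + m : ℝ) = 1 + (-3/2 + m) by ring, Real.rpow_add hq0 1 (-3/2 + m),
        Real.rpow_one]
    simp only [chiD, e1, e2]
    ring
  rw [setIntegral_congr_fun measurableSet_Ioc hcongr, ← intervalIntegral.integral_of_le hab]
  have hi1 : IntervalIntegrable (fun q : ℝ => q ^ (-1/2 - m)) volume a b :=
    intervalIntegral.intervalIntegrable_rpow (Or.inr h0)
  have hi2 : IntervalIntegrable (fun q : ℝ => κ * q ^ (-1/2 + m)) volume a b :=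
    (intervalIntegral.intervalIntegrable_rpow (Or.inr h0)).const_mul κ
  rw [intervalIntegral.integral_add hi1 hi2, intervalIntegral.integral_const_mul,
    integral_rpow (Or.inr ⟨fun h => hm1 (by linarith), h0⟩),
    integral_rpow (Or.inr ⟨fun h => hm2 (by linarith), h0⟩),
    show (-1/2 - m + 1 : ℝ) = 1/2 - m by ring,
    show (-1/2 + m + 1 : ℝ) = 1/2 + m by ring]
  unfold RD
  ring

lemma key_algebra (m κ p : ℝ) (hm1 : m ≠ 1/2) (hm2 : m ≠ -1/2) (hp : 0 < p) :
    p ^ 2 * chiD m κ p + (m^2 - 1/4) * RD m κ p - p * FD m κ p = 0 := by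
  have hp2 : (p:ℝ)^2 ≠ 0 := pow_ne_zero 2 hp.ne'
  have d1 : (1/2 - m : ℝ) ≠ 0 := fun h => hm1 (by linarith)
  have d2 : (1/2 + m : ℝ) ≠ 0 := fun h => hm2 (by linarith)
  have h1 : p ^ (-3/2 - m) = p ^ (1/2 - m) / p^2 := by
    rw [eq_div_iff hp2, ← Real.rpow_natCast p 2, ← Real.rpow_add hp]
    congr 1; push_cast; ring
  have h2 : p ^ (-3/2 + m) = p ^ (1/2 + m) / p^2 := by
    rw [eq_div_iff hp2, ← Real.rpow_natCast p 2, ← Real.rpow_add hp]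
    congr 1; push_cast; ring
  have h3 : p ^ (-1/2 - m) = p ^ (1/2 - m) / p := by
    rw [eq_div_iff hp.ne']
    nth_rewrite 2 [← Real.rpow_one p]
    rw [← Real.rpow_add hp]; congr 1; ring
  have h4 : p ^ (-1/2 + m) = p ^ (1/2 + m) / p := by
    rw [eq_div_iff hp.ne']
    nth_rewrite 2 [← Real.rpow_one p]
    rw [← Real.rpow_add hp]; congr 1; ring
  have cp : (p:ℝ) * p⁻¹ = 1 := mul_inv_cancel₀ hp.ne'
  have cp2 : (p:ℝ)^2 * (p^2)⁻¹ = 1 := mul_inv_cancel₀ hp2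
  have c1 : (1/2 - m : ℝ) * (1/2 - m)⁻¹ = 1 := mul_inv_cancel₀ d1
  have c2 : (1/2 + m : ℝ) * (1/2 + m)⁻¹ = 1 := mul_inv_cancel₀ d2
  unfold chiD RD FD
  rw [h1, h2, h3, h4]
  linear_combination (p ^ (1/2 - m) + κ * p ^ (1/2 + m)) * cp2
    + (-(1/2 + m) * p ^ (1/2 - m)) * c1 + (-((1/2 - m) * κ) * p ^ (1/2 + m)) * c2
    + (-(1/2 - m) * p ^ (1/2 - m) - (1/2 + m) * κ * p ^ (1/2 + m)) * cp


lemma coupling (m κ Λ : ℝ) (hm1 : m ≠ 1/2) (hm2 : m ≠ -1/2) (hΛ : 0 < Λ)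
    (hden : (1/2 - m)⁻¹ * Λ ^ (-m) + κ * (1/2 + m)⁻¹ * Λ ^ m ≠ 0) :
    runningCouplingD m κ Λ / Λ * RD m κ Λ = -(FD m κ Λ) := by
  have d1 : (1/2 - m : ℝ) ≠ 0 := fun h => hm1 (by linarith)
  have d2 : (1/2 + m : ℝ) ≠ 0 := fun h => hm2 (by linarith)
  have hsne : Λ ^ (1/2:ℝ) ≠ 0 := (Real.rpow_pos_of_pos hΛ _).ne'
  have r1 : Λ ^ (1/2 - m) = Λ ^ (1/2:ℝ) * Λ ^ (-m) := by
    rw [show (1/2 - m : ℝ) = 1/2 + (-m) by ring, Real.rpow_add hΛ]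
  have r2 : Λ ^ (1/2 + m) = Λ ^ (1/2:ℝ) * Λ ^ m := Real.rpow_add hΛ _ _
  have r3 : Λ ^ (-1/2 - m) = (Λ ^ (1/2:ℝ))⁻¹ * Λ ^ (-m) := by
    rw [show (-1/2 - m : ℝ) = -(1/2) + (-m) by ring, Real.rpow_add hΛ,
      Real.rpow_neg hΛ.le]
  have r4 : Λ ^ (-1/2 + m) = (Λ ^ (1/2:ℝ))⁻¹ * Λ ^ m := by
    rw [show (-1/2 + m : ℝ) = -(1/2) + m by ring, Real.rpow_add hΛ,
      Real.rpow_neg hΛ.le]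
  have rΛ : Λ ^ (1/2:ℝ) * Λ ^ (1/2:ℝ) = Λ := by
    rw [← Real.rpow_add hΛ]; norm_num
  unfold runningCouplingD RD FD
  rw [r1, r2, r3, r4]
  generalize hU : Λ ^ (-m) = U at hden ⊢
  generalize hV : Λ ^ m = V at hden ⊢
  generalize hS : Λ ^ (1/2:ℝ) = S at rΛ hsne ⊢
  rw [← rΛ]
  have cD : ((1/2 - m)⁻¹ * U + κ * (1/2 + m)⁻¹ * V) *
      ((1/2 - m)⁻¹ * U + κ * (1/2 + m)⁻¹ * V)⁻¹ = 1 := mul_inv_cancel₀ hden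
  have cS : S * S⁻¹ = 1 := mul_inv_cancel₀ hsne
  have hinv : (S*S)⁻¹ = S⁻¹ * S⁻¹ := mul_inv S S
  linear_combination (-(((1/2 - m) * U + κ * (1/2 + m) * V)) * S * ((S*S)⁻¹)) * cD
    + (-(((1/2 - m) * U + κ * (1/2 + m) * V)) * S) * hinv
    + (-(((1/2 - m) * U + κ * (1/2 + m) * V)) * S⁻¹) * cS

/-- `ψ` is integrable on bounded subsets of `(0,∞)`. -/
lemma psi_integrableOn {ψ : ℝ → ℂ} (hψL2 : MemLp ψ 2 (volume.restrict (Set.Ioi 0)))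
    (b : ℝ) : IntegrableOn ψ (Set.Ioc 0 b) volume := by
  have h1 : MemLp ψ 2 (volume.restrict (Set.Ioc 0 b)) := by
    have := hψL2.restrict (Set.Ioc 0 b)
    rwa [Measure.restrict_restrict_of_subset Set.Ioc_subset_Ioi_self] at this
  haveI : IsFiniteMeasure (volume.restrict (Set.Ioc (0:ℝ) b)) := by
    constructor
    rw [Measure.restrict_apply_univ, Real.volume_Ioc]
    exact ENNReal.ofReal_lt_top
  exact memLp_one_iff_integrable.mp (h1.mono_exponent (by norm_num))

lemma qpsi_integrableOn {ψ : ℝ → ℂ} (hψL2 : MemLp ψ 2 (volume.restrict (Set.Ioi 0)))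
    (b : ℝ) : IntegrableOn (fun q : ℝ => (q : ℂ) * ψ q) (Set.Ioc 0 b) volume := by
  refine (psi_integrableOn hψL2 b).bdd_mul (c := |b|)
    (Complex.continuous_ofReal.aestronglyMeasurable) ?_
  filter_upwards [ae_restrict_mem measurableSet_Ioc] with q hq
  rw [Complex.norm_real, Real.norm_eq_abs]
  rw [abs_of_pos hq.1]
  exact le_trans hq.2 (le_abs_self b)

lemma chi_intervalIntegrable (m κ a b : ℝ) (ha : 0 < a) (hab : a ≤ b) :
    IntervalIntegrable (chiD m κ) volume a b := by
  have h0 : (0:ℝ) ∉ Set.uIcc a b := by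
    rw [Set.uIcc_of_le hab]; exact fun h => absurd h.1 (not_le.2 ha)
  exact (intervalIntegral.intervalIntegrable_rpow (Or.inr h0)).add
    ((intervalIntegral.intervalIntegrable_rpow (Or.inr h0)).const_mul κ)

lemma chiC_integrableOn (m κ a b : ℝ) (ha : 0 < a) (hab : a ≤ b) :
    IntegrableOn (fun q : ℝ => ((chiD m κ q : ℝ) : ℂ)) (Set.Ioc a b) volume :=
  ((intervalIntegrable_iff_integrableOn_Ioc_of_le hab).mp
    (chi_intervalIntegrable m κ a b ha hab)).ofReal

lemma qchiC_integrableOn (m κ a b : ℝ) (ha : 0 < a) (hab : a ≤ b) :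
    IntegrableOn (fun q : ℝ => (q:ℂ) * ((chiD m κ q : ℝ) : ℂ)) (Set.Ioc a b) volume := by
  refine (chiC_integrableOn m κ a b ha hab).bdd_mul (c := |b|)
    (Complex.continuous_ofReal.aestronglyMeasurable) ?_
  filter_upwards [ae_restrict_mem measurableSet_Ioc] with q hq
  rw [Complex.norm_real, Real.norm_eq_abs]
  rw [abs_of_pos (lt_trans ha hq.1)]
  exact le_trans hq.2 (le_abs_self b)

lemma setIntegral_chiC (m κ a b : ℝ) (hm1 : m ≠ 1/2) (hm2 : m ≠ -1/2)
    (ha : 0 < a) (hab : a ≤ b) :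
    ∫ q in Set.Ioc a b, ((chiD m κ q : ℝ) : ℂ) = ((SD m κ b - SD m κ a : ℝ) : ℂ) := by
  rw [show (∫ q in Set.Ioc a b, ((chiD m κ q : ℝ) : ℂ))
      = ((∫ q in Set.Ioc a b, chiD m κ q : ℝ) : ℂ) from integral_ofReal,
    intchi m κ a b hm1 hm2 ha hab]

lemma setIntegral_qchiC (m κ a b : ℝ) (hm1 : m ≠ 1/2) (hm2 : m ≠ -1/2)
    (ha : 0 < a) (hab : a ≤ b) :
    ∫ q in Set.Ioc a b, ((q:ℝ):ℂ) * ((chiD m κ q : ℝ) : ℂ) = ((RD m κ b - RD m κ a : ℝ) : ℂ) := by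
  rw [setIntegral_congr_fun measurableSet_Ioc
    (fun q _ => by push_cast; ring : Set.EqOn (fun q : ℝ => (q:ℂ) * ((chiD m κ q : ℝ) : ℂ))
      (fun q : ℝ => ((q * chiD m κ q : ℝ) : ℂ)) (Set.Ioc a b)),
    show (∫ q in Set.Ioc a b, ((q * chiD m κ q : ℝ) : ℂ))
      = ((∫ q in Set.Ioc a b, q * chiD m κ q : ℝ) : ℂ) from integral_ofReal,
    intqchi m κ a b hm1 hm2 ha hab]

lemma Gzero (m κ Λ₀ : ℝ) (ψ : ℝ → ℂ)
    (hψ : ∀ p ≥ Λ₀, ψ p = ((p ^ (-3/2 - m) + κ * p ^ (-3/2 + m) : ℝ) : ℂ))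
    (p : ℝ) (hpΛ₀ : Λ₀ ≤ p) : renormalizedActionD m κ ψ p = 0 := by
  unfold renormalizedActionD
  rw [hψ p hpΛ₀, sub_self, mul_zero, zero_add]
  rw [setIntegral_congr_fun (g := fun _ => (0:ℂ)) measurableSet_Ioi
    (fun q hq => by rw [hψ q (hpΛ₀.trans (le_of_lt hq)), sub_self, mul_zero]),
    integral_zero, mul_zero]

lemma pointwise_eq (m κ Λ₀ Λ₁ Λ p : ℝ) (hm1 : m ≠ 1/2) (hm2 : m ≠ -1/2)
    (hΛ₀ : 0 < Λ₀) (ψ : ℝ → ℂ)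
    (hψL2 : MemLp ψ 2 (volume.restrict (Set.Ioi 0)))
    (hψ : ∀ p ≥ Λ₀, ψ p = ((p ^ (-3/2 - m) + κ * p ^ (-3/2 + m) : ℝ) : ℂ))
    (hnorm : ∫ q in Set.Ioc (0:ℝ) Λ₀, (q : ℂ) * ψ q
      = ((Λ₀ ^ (1/2 - m) / (1/2 - m) + κ * Λ₀ ^ (1/2 + m) / (1/2 + m) : ℝ) : ℂ))
    (hΛ₁ : Λ₀ ≤ Λ₁) (hΛ : Λ₁ ≤ Λ)
    (hden : (1/2 - m)⁻¹ * Λ ^ (-m) + κ * (1/2 + m)⁻¹ * Λ ^ m ≠ 0)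
    (hp : 0 < p) :
    cutoffBesselD m (runningCouplingD m κ) ψ Λ p = renormalizedActionD m κ ψ p := by
  have hΛ₀Λ : Λ₀ ≤ Λ := hΛ₁.trans hΛ
  have hΛpos : 0 < Λ := lt_of_lt_of_le hΛ₀ hΛ₀Λ
  have hnorm' : (∫ q in Set.Ioc (0:ℝ) Λ₀, (q : ℂ) * ψ q) = ((RD m κ Λ₀ : ℝ) : ℂ) := hnorm
  by_cases hpΛ : p ≤ Λ
  swap
  · -- p > Λ : both sides vanish
    unfold cutoffBesselD
    rw [Set.indicator_of_notMem (fun h => hpΛ h.2),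
      Gzero m κ Λ₀ ψ hψ p (hΛ₀Λ.trans (le_of_lt (not_le.mp hpΛ)))]
  -- p ∈ (0, Λ]
  unfold cutoffBesselD
  rw [Set.indicator_of_mem (Set.mem_Ioc.mpr ⟨hp, hpΛ⟩)]
  -- integrability facts
  have hψI : IntegrableOn ψ (Set.Ioc 0 Λ) volume := psi_integrableOn hψL2 Λ
  have hqψI : IntegrableOn (fun q : ℝ => (q:ℂ) * ψ q) (Set.Ioc 0 Λ) volume :=
    qpsi_integrableOn hψL2 Λ
  have hminI : IntegrableOn (fun q : ℝ => ((min p q : ℝ):ℂ) * ψ q) (Set.Ioc 0 Λ) volume := by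
    refine hψI.bdd_mul (c := p)
      ((Complex.continuous_ofReal.comp (continuous_const.min continuous_id)).aestronglyMeasurable) ?_
    filter_upwards [ae_restrict_mem measurableSet_Ioc] with q hq
    rw [Complex.norm_real, Real.norm_eq_abs, abs_of_pos (lt_min hp hq.1)]
    exact min_le_left _ _
  -- the total charge integral
  have hI2 : (∫ q in Set.Ioc (0:ℝ) Λ, (q : ℂ) * ψ q) = ((RD m κ Λ : ℝ) : ℂ) := by
    rw [← Set.Ioc_union_Ioc_eq_Ioc hΛ₀.le hΛ₀Λ,
      setIntegral_union (Set.Ioc_disjoint_Ioc_of_le le_rfl) measurableSet_Ioc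
        (hqψI.mono_set (Set.Ioc_subset_Ioc_right hΛ₀Λ))
        (hqψI.mono_set (Set.Ioc_subset_Ioc_left hΛ₀.le)), hnorm',
      setIntegral_congr_fun (g := fun q : ℝ => (q:ℂ) * ((chiD m κ q : ℝ):ℂ))
        measurableSet_Ioc
        (fun q hq => by simp only [chiD]; rw [hψ q hq.1.le]),
      setIntegral_qchiC m κ Λ₀ Λ hm1 hm2 hΛ₀ hΛ₀Λ]
    push_cast
    ring
  -- counterterm
  have hT : ((runningCouplingD m κ Λ / Λ : ℝ) : ℂ) * (p:ℂ)
      * (∫ q in Set.Ioc (0:ℝ) Λ, (q : ℂ) * ψ q) = ((-(FD m κ Λ) * p : ℝ) : ℂ) := by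
    rw [hI2]
    norm_cast
    linear_combination p * coupling m κ Λ hm1 hm2 hΛpos hden
  -- the master cancellation, in ℂ
  have hfinC : ((m^2 - 1/4 : ℝ):ℂ) * ((p:ℂ) * ((SD m κ Λ : ℝ):ℂ))
      - ((FD m κ Λ : ℝ):ℂ) * (p:ℂ) + (p:ℂ)^2 * ((chiD m κ p : ℝ):ℂ)
      - ((m^2 - 1/4 : ℝ):ℂ) * ((p:ℂ) * ((SD m κ p : ℝ):ℂ))
      + ((m^2 - 1/4 : ℝ):ℂ) * ((RD m κ p : ℝ):ℂ) = 0 := by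
    have e1 := cSD_eq_FD m κ Λ hm1 hm2
    have e2 := cSD_eq_FD m κ p hm1 hm2
    have e3 := key_algebra m κ p hm1 hm2 hp
    have hfin : (m^2 - 1/4) * (p * SD m κ Λ) - FD m κ Λ * p + p^2 * chiD m κ p
        - (m^2 - 1/4) * (p * SD m κ p) + (m^2 - 1/4) * RD m κ p = 0 := by
      linear_combination p * e1 - p * e2 + e3
    exact_mod_cast congrArg (fun x : ℝ => (x : ℂ)) hfin
  by_cases hpΛ₀ : p ≤ Λ₀
  · -- CASE A : 0 < p ≤ Λ₀
    have hA3 : (∫ q in Set.Ioc p Λ₀, (q:ℂ) * ψ q)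
        = ((RD m κ Λ₀ : ℝ):ℂ) - (∫ q in Set.Ioc (0:ℝ) p, (q:ℂ) * ψ q) := by
      rw [← hnorm', ← Set.Ioc_union_Ioc_eq_Ioc hp.le hpΛ₀,
        setIntegral_union (Set.Ioc_disjoint_Ioc_of_le le_rfl) measurableSet_Ioc
          ((qpsi_integrableOn hψL2 Λ₀).mono_set (Set.Ioc_subset_Ioc_right hpΛ₀))
          ((qpsi_integrableOn hψL2 Λ₀).mono_set (Set.Ioc_subset_Ioc_left hp.le))]
      ring
    have hI1 : (∫ q in Set.Ioc (0:ℝ) Λ, ((min p q : ℝ):ℂ) * ψ q)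
        = (∫ q in Set.Ioc (0:ℝ) p, (q:ℂ) * ψ q)
          + (p:ℂ) * (∫ q in Set.Ioc p Λ₀, ψ q)
          + (p:ℂ) * ((SD m κ Λ - SD m κ Λ₀ : ℝ):ℂ) := by
      rw [← Set.Ioc_union_Ioc_eq_Ioc hp.le hpΛ,
        setIntegral_union (Set.Ioc_disjoint_Ioc_of_le le_rfl) measurableSet_Ioc
          (hminI.mono_set (Set.Ioc_subset_Ioc_right hpΛ))
          (hminI.mono_set (Set.Ioc_subset_Ioc_left hp.le)),
        setIntegral_congr_fun (g := fun q : ℝ => (q:ℂ) * ψ q) measurableSet_Ioc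
          (fun q hq => by rw [min_eq_right hq.2]),
        setIntegral_congr_fun (s := Set.Ioc p Λ) (g := fun q : ℝ => (p:ℂ) * ψ q)
          measurableSet_Ioc (fun q hq => by rw [min_eq_left hq.1.le]),
        integral_const_mul, ← Set.Ioc_union_Ioc_eq_Ioc hpΛ₀ hΛ₀Λ,
        setIntegral_union (Set.Ioc_disjoint_Ioc_of_le le_rfl) measurableSet_Ioc
          ((psi_integrableOn hψL2 Λ₀).mono_set (Set.Ioc_subset_Ioc_left hp.le))
          (hψI.mono_set (Set.Ioc_subset_Ioc_left hΛ₀.le)),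
        setIntegral_congr_fun (s := Set.Ioc Λ₀ Λ) (g := fun q : ℝ => ((chiD m κ q : ℝ):ℂ))
          measurableSet_Ioc (fun q hq => by simp only [chiD]; exact hψ q hq.1.le),
        setIntegral_chiC m κ Λ₀ Λ hm1 hm2 hΛ₀ hΛ₀Λ]
      ring
    have hpsiI : IntegrableOn ψ (Set.Ioc p Λ₀) volume :=
      (psi_integrableOn hψL2 Λ₀).mono_set (Set.Ioc_subset_Ioc_left hp.le)
    have hqpsiI : IntegrableOn (fun q : ℝ => (q:ℂ) * ψ q) (Set.Ioc p Λ₀) volume :=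
      (qpsi_integrableOn hψL2 Λ₀).mono_set (Set.Ioc_subset_Ioc_left hp.le)
    have h1 : IntegrableOn (fun q : ℝ => (p:ℂ) * ψ q) (Set.Ioc p Λ₀) volume :=
      hpsiI.const_mul _
    have h3 : IntegrableOn (fun q : ℝ => (p:ℂ) * ((chiD m κ q : ℝ):ℂ)) (Set.Ioc p Λ₀) volume :=
      (chiC_integrableOn m κ p Λ₀ hp hpΛ₀).const_mul _
    have h4 := qchiC_integrableOn m κ p Λ₀ hp hpΛ₀
    have h12 : IntegrableOn (fun q : ℝ => (p:ℂ) * ψ q - (q:ℂ) * ψ q) (Set.Ioc p Λ₀) volume :=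
      h1.sub hqpsiI
    have h34 : IntegrableOn (fun q : ℝ => (p:ℂ) * ((chiD m κ q : ℝ):ℂ)
        - (q:ℂ) * ((chiD m κ q : ℝ):ℂ)) (Set.Ioc p Λ₀) volume :=
      h3.sub h4
    have hJ : (∫ q in Set.Ioi p, ((p - q : ℝ):ℂ)
          * (ψ q - ((q ^ (-3/2 - m) + κ * q ^ (-3/2 + m) : ℝ) : ℂ)))
        = (p:ℂ) * (∫ q in Set.Ioc p Λ₀, ψ q)
          - (((RD m κ Λ₀ : ℝ):ℂ) - (∫ q in Set.Ioc (0:ℝ) p, (q:ℂ) * ψ q))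
          - (p:ℂ) * ((SD m κ Λ₀ - SD m κ p : ℝ):ℂ)
          + ((RD m κ Λ₀ - RD m κ p : ℝ):ℂ) := by
      have hg : IntegrableOn (fun q : ℝ => ψ q
          - ((q ^ (-3/2 - m) + κ * q ^ (-3/2 + m) : ℝ) : ℂ)) (Set.Ioc p Λ₀) volume :=
        hpsiI.sub (chiC_integrableOn m κ p Λ₀ hp hpΛ₀)
      have hfI : IntegrableOn (fun q : ℝ => ((p - q : ℝ):ℂ)
          * (ψ q - ((q ^ (-3/2 - m) + κ * q ^ (-3/2 + m) : ℝ) : ℂ))) (Set.Ioc p Λ₀) volume := by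
        refine hg.bdd_mul (c := Λ₀)
          ((Complex.continuous_ofReal.comp
            (continuous_const.sub continuous_id)).aestronglyMeasurable) ?_
        filter_upwards [ae_restrict_mem measurableSet_Ioc] with q hq
        rw [Complex.norm_real, Real.norm_eq_abs, abs_sub_comm, abs_of_pos (sub_pos.2 hq.1)]
        linarith [hq.2, hp]
      have h0 : IntegrableOn (fun q : ℝ => ((p - q : ℝ):ℂ)
          * (ψ q - ((q ^ (-3/2 - m) + κ * q ^ (-3/2 + m) : ℝ) : ℂ))) (Set.Ioi Λ₀) volume := by
        apply (integrable_zero _ _ _).congr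
        filter_upwards [ae_restrict_mem measurableSet_Ioi] with q hq
        rw [hψ q (le_of_lt hq), sub_self, mul_zero, Pi.zero_apply]
      rw [← Set.Ioc_union_Ioi_eq_Ioi hpΛ₀,
        setIntegral_union Set.Ioc_disjoint_Ioi_same measurableSet_Ioi hfI h0,
        setIntegral_congr_fun (s := Set.Ioi Λ₀) (g := fun _ : ℝ => (0:ℂ)) measurableSet_Ioi
          (fun q hq => by rw [hψ q (le_of_lt hq), sub_self, mul_zero]),
        integral_zero, add_zero]
      rw [setIntegral_congr_fun (g := fun q : ℝ => ((p:ℂ) * ψ q - (q:ℂ) * ψ q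
            - ((p:ℂ) * ((chiD m κ q : ℝ):ℂ) - (q:ℂ) * ((chiD m κ q : ℝ):ℂ))))
          measurableSet_Ioc
          (fun q hq => by simp only [chiD]; push_cast; ring)]
      rw [integral_sub h12 h34, integral_sub h1 hqpsiI, integral_sub h3 h4,
        integral_const_mul, integral_const_mul, hA3,
        setIntegral_chiC m κ p Λ₀ hm1 hm2 hp hpΛ₀,
        setIntegral_qchiC m κ p Λ₀ hm1 hm2 hp hpΛ₀]
      push_cast
      ring
    unfold renormalizedActionD
    rw [hI1, hT, hJ]
    simp only [chiD] at hfinC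
    push_cast at hfinC ⊢
    linear_combination hfinC
  · -- CASE B : Λ₀ < p ≤ Λ
    have hΛ₀p : Λ₀ ≤ p := (not_le.mp hpΛ₀).le
    rw [Gzero m κ Λ₀ ψ hψ p hΛ₀p]
    have hI1 : (∫ q in Set.Ioc (0:ℝ) Λ, ((min p q : ℝ):ℂ) * ψ q)
        = ((RD m κ Λ₀ : ℝ):ℂ) + ((RD m κ p - RD m κ Λ₀ : ℝ):ℂ)
          + (p:ℂ) * ((SD m κ Λ - SD m κ p : ℝ):ℂ) := by
      rw [← Set.Ioc_union_Ioc_eq_Ioc hp.le hpΛ,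
        setIntegral_union (Set.Ioc_disjoint_Ioc_of_le le_rfl) measurableSet_Ioc
          (hminI.mono_set (Set.Ioc_subset_Ioc_right hpΛ))
          (hminI.mono_set (Set.Ioc_subset_Ioc_left hp.le)),
        setIntegral_congr_fun (g := fun q : ℝ => (q:ℂ) * ψ q) measurableSet_Ioc
          (fun q hq => by rw [min_eq_right hq.2]),
        setIntegral_congr_fun (s := Set.Ioc p Λ)
          (g := fun q : ℝ => (p:ℂ) * ((chiD m κ q : ℝ):ℂ)) measurableSet_Ioc
          (fun q hq => by
            simp only [chiD]
            rw [min_eq_left hq.1.le, hψ q (hΛ₀p.trans hq.1.le)]),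
        integral_const_mul, setIntegral_chiC m κ p Λ hm1 hm2 hp hpΛ,
        ← Set.Ioc_union_Ioc_eq_Ioc hΛ₀.le hΛ₀p,
        setIntegral_union (Set.Ioc_disjoint_Ioc_of_le le_rfl) measurableSet_Ioc
          ((qpsi_integrableOn hψL2 p).mono_set (Set.Ioc_subset_Ioc_right hΛ₀p))
          ((qpsi_integrableOn hψL2 p).mono_set (Set.Ioc_subset_Ioc_left hΛ₀.le)), hnorm',
        setIntegral_congr_fun (s := Set.Ioc Λ₀ p)
          (g := fun q : ℝ => (q:ℂ) * ((chiD m κ q : ℝ):ℂ)) measurableSet_Ioc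
          (fun q hq => by simp only [chiD]; rw [hψ q hq.1.le]),
        setIntegral_qchiC m κ Λ₀ p hm1 hm2 hΛ₀ hΛ₀p]
    rw [hI1, hT, hψ p hΛ₀p]
    simp only [chiD] at hfinC
    push_cast at hfinC ⊢
    linear_combination hfinC

end BesselDAux

/-- "Physicists' style" renormalization: with the running coupling `f_Λ` solving the RG
flow, the cutoff Dirichlet Bessel operators applied to the singular vector `ψ` converge
in `L²((0,∞))` to the action of the corresponding self-adjoint realization. -/
theorem cutoff_besselD_converges_on_singular_vector
    (m κ Λ₀ : ℝ) (hm : m ∈ Set.Ioo (-1:ℝ) 1) (hm1 : m ≠ 1/2) (hm2 : m ≠ -1/2)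
    (hΛ₀ : 0 < Λ₀) (ψ : ℝ → ℂ)
    (hψL2 : MemLp ψ 2 (volume.restrict (Set.Ioi 0)))
    (hψ : ∀ p ≥ Λ₀, ψ p = ((p ^ (-3/2 - m) + κ * p ^ (-3/2 + m) : ℝ) : ℂ))
    (hnorm : ∫ q in Set.Ioc (0:ℝ) Λ₀, (q : ℂ) * ψ q
      = ((Λ₀ ^ (1/2 - m) / (1/2 - m) + κ * Λ₀ ^ (1/2 + m) / (1/2 + m) : ℝ) : ℂ))
    (Λ₁ : ℝ) (hΛ₁ : Λ₀ ≤ Λ₁)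
    (hden : ∀ Λ ≥ Λ₁, (1/2 - m)⁻¹ * Λ ^ (-m) + κ * (1/2 + m)⁻¹ * Λ ^ m ≠ 0) :
    Tendsto (fun Λ : ℝ =>
        eLpNorm (fun p => cutoffBesselD m (runningCouplingD m κ) ψ Λ p
            - renormalizedActionD m κ ψ p) 2
          (volume.restrict (Set.Ioi 0)))
      atTop (nhds 0) := by
  have key : ∀ Λ ≥ Λ₁,
      eLpNorm (fun p => cutoffBesselD m (runningCouplingD m κ) ψ Λ p
        - renormalizedActionD m κ ψ p) 2 (volume.restrict (Set.Ioi 0)) = 0 := by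
    intro Λ hΛ'
    have hae : (fun p => cutoffBesselD m (runningCouplingD m κ) ψ Λ p
        - renormalizedActionD m κ ψ p) =ᵐ[volume.restrict (Set.Ioi 0)] 0 := by
      filter_upwards [ae_restrict_mem measurableSet_Ioi] with p hp
      rw [Pi.zero_apply, sub_eq_zero]
      exact BesselDAux.pointwise_eq m κ Λ₀ Λ₁ Λ p hm1 hm2 hΛ₀ ψ hψL2 hψ hnorm hΛ₁ hΛ'
        (hden Λ hΛ') hp
    rw [eLpNorm_congr_ae hae, eLpNorm_zero]
  exact Tendsto.congr' (Filter.eventually_atTop.mpr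
    ⟨Λ₁, fun Λ hΛ' => (key Λ hΛ').symm⟩) tendsto_const_nhds
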